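/- Let e : ι → H and f : κ → H be orthonormal bases of H (ι, κ finite types), with associated classical structures δ_e and δ_f, and let D_e = { T : H →L[ℂ] H | ∀ i, ∃ c : ℂ, T (e i) = c • e i } and D_f = { T : H →L[ℂ] H | ∀ j, ∃ c : ℂ, T (f j) = c • f j } be the induced commutative von Neumann subalgebras of diagonal operators. Then every subspace K copyable along both δ_e and δ_f satisfies K = ⊥ or K = ⊤ if and only if D_e ∩ D_f = { z • (1 : H →L[ℂ] H) | z : ℂ }, i.e. the two algebras intersect in the scalar multiples of the identity. -/

import Mathlib

open scoped TensorProduct InnerProductSpace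

/-- The orthogonal projection of `H` onto the subspace `K`, regarded as an endomorphism
`P_K : H →ₗ[ℂ] H`. -/
noncomputable def projL {H : Type*} [NormedAddCommGroup H] [InnerProductSpace ℂ H]
    [FiniteDimensional ℂ H] (K : Submodule ℂ H) : H →ₗ[ℂ] H :=
  K.subtype ∘ₗ K.orthogonalProjectionOnto.toLinearMap

/-- The classical structure `δ_e : H →ₗ[ℂ] H ⊗[ℂ] H` associated with an orthonormal basis
`e`, determined by `δ_e x = ∑ i, ⟪e i, x⟫_ℂ • (e i ⊗ₜ e i)`. -/
noncomputable def delta {ι H : Type*} [Fintype ι] [NormedAddCommGroup H]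
    [InnerProductSpace ℂ H] (e : ι → H) : H →ₗ[ℂ] H ⊗[ℂ] H :=
  ∑ i, (innerSL ℂ (e i)).toLinearMap.smulRight (e i ⊗ₜ[ℂ] e i)

/-- A subspace `K` of `H` is copyable along `δ_e` if `δ_e ∘ₗ P_K = (P_K ⊗ P_K) ∘ₗ δ_e`. -/
def Copyable {ι H : Type*} [Fintype ι] [NormedAddCommGroup H] [InnerProductSpace ℂ H]
    [FiniteDimensional ℂ H] (e : ι → H) (K : Submodule ℂ H) : Prop :=
  delta e ∘ₗ projL K = TensorProduct.map (projL K) (projL K) ∘ₗ delta e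

section aux
variable {ι H : Type*} [Fintype ι] [NormedAddCommGroup H] [InnerProductSpace ℂ H]
  [FiniteDimensional ℂ H]

lemma projL_mem (K : Submodule ℂ H) (x : H) : projL K x ∈ K := (K.orthogonalProjectionOnto x).2

lemma projL_eq_self {K : Submodule ℂ H} {x : H} (hx : x ∈ K) : projL K x = x := by
  simpa [projL] using congrArg (Subtype.val) (K.orthogonalProjectionOnto_mem_subspace_eq_self (⟨x, hx⟩ : K))

lemma projL_eq_zero {K : Submodule ℂ H} {x : H} (hx : x ∈ Kᗮ) : projL K x = 0 := by
  simp [projL, Submodule.orthogonalProjectionOnto_apply_of_mem_orthogonal hx]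

lemma projL_inner (K : Submodule ℂ H) (x y : H) :
    ⟪projL K x, y⟫_ℂ = ⟪x, projL K y⟫_ℂ :=
  K.inner_starProjection_left_eq_right x y

lemma delta_apply (e : ι → H) (x : H) :
    delta e x = ∑ i, ⟪e i, x⟫_ℂ • (e i ⊗ₜ[ℂ] e i) := by
  simp [delta, LinearMap.sum_apply]

lemma delta_basis (e : OrthonormalBasis ι ℂ H) (i : ι) :
    delta (⇑e) (e i) = e i ⊗ₜ[ℂ] e i := by
  classical
  rw [delta_apply]
  rw [Finset.sum_eq_single i]
  · simp [orthonormal_iff_ite.mp e.orthonormal]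
  · intro m _ hm
    simp [orthonormal_iff_ite.mp e.orthonormal, hm]
  · simp

/-- coefficient functional on the tensor product -/
noncomputable def coeffT (u v : H) : H ⊗[ℂ] H →ₗ[ℂ] ℂ :=
  TensorProduct.lift (LinearMap.mk₂ ℂ (fun x y => ⟪u, x⟫_ℂ * ⟪v, y⟫_ℂ)
    (by intros; simp [inner_add_right]; ring)
    (by intros; simp [inner_smul_right]; ring)
    (by intros; simp [inner_add_right]; ring)
    (by intros; simp [inner_smul_right]; ring))

@[simp] lemma coeffT_tmul (u v x y : H) : coeffT u v (x ⊗ₜ[ℂ] y) = ⟪u, x⟫_ℂ * ⟪v, y⟫_ℂ := rfl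

lemma copyable_iff (e : OrthonormalBasis ι ℂ H) (K : Submodule ℂ H) :
    Copyable (⇑e) K ↔ ∀ i, projL K (e i) = 0 ∨ projL K (e i) = e i := by
  classical
  constructor
  · intro h i
    have h1 := congrArg (fun g => g (e i)) h
    simp only [LinearMap.comp_apply, delta_basis] at h1
    -- h1 : delta e (projL K (e i)) = TensorProduct.map P P (e i ⊗ e i)
    have h2 : delta (⇑e) (projL K (e i)) = projL K (e i) ⊗ₜ[ℂ] projL K (e i) := by
      rw [h1]; rfl
    set a : ι → ℂ := fun m => ⟪e m, projL K (e i)⟫_ℂ with ha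
    have key : ∀ j k : ι, (if j = k then a j else 0) = a j * a k := by
      intro j k
      have hc := congrArg (coeffT (e j) (e k)) h2
      rw [delta_apply] at hc
      simp only [map_sum, map_smul, coeffT_tmul, smul_eq_mul,
        orthonormal_iff_ite.mp e.orthonormal] at hc
      rw [Finset.sum_eq_single j (fun m _ hm => by simp [Ne.symm hm])
        (fun hj => absurd (Finset.mem_univ j) hj)] at hc
      by_cases hjk : j = k
      · subst hjk
        rw [if_pos rfl]
        simpa using hc
      · rw [if_neg hjk]
        have hkj : ¬ k = j := fun h => hjk h.symm
        simpa [hkj] using hc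
    have hai : a i = ⟪projL K (e i), projL K (e i)⟫_ℂ := by
      have hpp : projL K (projL K (e i)) = projL K (e i) := projL_eq_self (projL_mem K _)
      calc a i = ⟪e i, projL K (projL K (e i))⟫_ℂ := by rw [hpp]
        _ = ⟪projL K (e i), projL K (e i)⟫_ℂ := (projL_inner K _ _).symm
    by_cases hz : a i = 0
    · left
      have : ⟪projL K (e i), projL K (e i)⟫_ℂ = 0 := by rw [← hai, hz]
      exact inner_self_eq_zero.mp this
    · right
      have hsq : a i * 1 = a i * a i := by
        rw [mul_one]; simpa using key i i
      have h1' : a i = 1 := (mul_left_cancel₀ hz hsq).symm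
      have hoff : ∀ j, j ≠ i → a j = 0 := by
        intro j hj
        have := key j i
        rw [if_neg hj, h1', mul_one] at this
        exact this.symm
      have expand : ∑ m, a m • e m = projL K (e i) := e.sum_repr' _
      rw [← expand]
      rw [Finset.sum_eq_single i]
      · rw [h1', one_smul]
      · intro m _ hm; rw [hoff m hm, zero_smul]
      · simp
  · intro h
    apply e.toBasis.ext
    intro i
    simp only [OrthonormalBasis.coe_toBasis, LinearMap.comp_apply, delta_basis,
      TensorProduct.map_tmul]
    rcases h i with h0 | h1
    · rw [h0]; simp [delta_apply]
    · rw [h1, delta_basis]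

lemma diag_inner (e : OrthonormalBasis ι ℂ H) (T : H →L[ℂ] H) (c : ι → ℂ)
    (hT : ∀ i, T (e i) = c i • e i) (i : ι) (x : H) :
    ⟪e i, T x⟫_ℂ = c i * ⟪e i, x⟫_ℂ := by
  classical
  conv_lhs => rw [← e.sum_repr' x]
  rw [map_sum, inner_sum]
  simp only [map_smul, hT, inner_smul_right, orthonormal_iff_ite.mp e.orthonormal]
  rw [Finset.sum_eq_single i]
  · simp; ring
  · intro m _ hm; simp [Ne.symm hm]
  · simp

end aux

/-- Two classical structures `δ_e` and `δ_f` are partially complementary (no nontrivial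
subspace is copyable along both) if and only if the induced commutative von Neumann
subalgebras `D_e` and `D_f` of diagonal operators intersect in the scalar multiples of
the identity. -/

theorem partially_complementary_iff_diagonal_algebras_trivial_inter
    {ι κ H : Type*} [Fintype ι] [Fintype κ] [NormedAddCommGroup H] [InnerProductSpace ℂ H]
    [FiniteDimensional ℂ H] (e : OrthonormalBasis ι ℂ H) (f : OrthonormalBasis κ ℂ H) :
    (∀ K : Submodule ℂ H, Copyable (⇑e) K → Copyable (⇑f) K → K = ⊥ ∨ K = ⊤) ↔
      {T : H →L[ℂ] H | ∀ i : ι, ∃ c : ℂ, T (e i) = c • e i} ∩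
          {T : H →L[ℂ] H | ∀ j : κ, ∃ c : ℂ, T (f j) = c • f j} =
        {T : H →L[ℂ] H | ∃ z : ℂ, T = z • (1 : H →L[ℂ] H)} := by
  constructor
  · intro h
    ext T
    simp only [Set.mem_inter_iff, Set.mem_setOf_eq]
    constructor
    · rintro ⟨he, hf⟩
      choose ce hce using he
      choose cf hcf using hf
      by_cases hne : Nonempty ι
      · obtain ⟨i₀⟩ := hne
        set c := ce i₀ with hc
        set K : Submodule ℂ H := LinearMap.ker (T - c • (1 : H →L[ℂ] H)).toLinearMap with hK
        have memK : ∀ x, x ∈ K ↔ T x = c • x := by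
          intro x
          simp [hK, LinearMap.mem_ker, sub_eq_zero]
        have hKe : ∀ i : ι, projL K (e i) = 0 ∨ projL K (e i) = e i := by
          intro i
          by_cases hci : ce i = c
          · right
            exact projL_eq_self ((memK (e i)).mpr (by rw [hce i, hci]))
          · left
            apply projL_eq_zero
            intro x hx
            have hx' : T x = c • x := (memK x).mp hx
            have : ⟪e i, T x⟫_ℂ = ce i * ⟪e i, x⟫_ℂ := diag_inner e T ce hce i x
            rw [hx', inner_smul_right] at this
            have : (c - ce i) * ⟪e i, x⟫_ℂ = 0 := by linear_combination this
            rcases mul_eq_zero.mp this with h' | h'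
            · exact absurd (by linear_combination h' : c = ce i) (Ne.symm hci)
            · rw [← inner_conj_symm, h', map_zero]
        have hKf : ∀ j : κ, projL K (f j) = 0 ∨ projL K (f j) = f j := by
          intro j
          by_cases hcj : cf j = c
          · right
            exact projL_eq_self ((memK (f j)).mpr (by rw [hcf j, hcj]))
          · left
            apply projL_eq_zero
            intro x hx
            have hx' : T x = c • x := (memK x).mp hx
            have : ⟪f j, T x⟫_ℂ = cf j * ⟪f j, x⟫_ℂ := diag_inner f T cf hcf j x
            rw [hx', inner_smul_right] at this
            have : (c - cf j) * ⟪f j, x⟫_ℂ = 0 := by linear_combination this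
            rcases mul_eq_zero.mp this with h' | h'
            · exact absurd (by linear_combination h' : c = cf j) (Ne.symm hcj)
            · rw [← inner_conj_symm, h', map_zero]
        rcases h K ((copyable_iff e K).mpr hKe) ((copyable_iff f K).mpr hKf) with hb | ht
        · exfalso
          have hmem : e i₀ ∈ K := (memK (e i₀)).mpr (by rw [hce i₀, hc])
          rw [hb, Submodule.mem_bot] at hmem
          exact e.orthonormal.ne_zero i₀ hmem
        · refine ⟨c, ?_⟩
          ext x
          have : x ∈ K := ht ▸ Submodule.mem_top
          simpa using (memK x).mp this
      · -- ι empty, H trivial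
        haveI : IsEmpty ι := not_nonempty_iff.mp hne
        haveI : Subsingleton H := e.toBasis.repr.toEquiv.subsingleton
        refine ⟨0, ?_⟩
        ext x
        exact Subsingleton.elim _ _
    · rintro ⟨z, rfl⟩
      constructor
      · intro i; exact ⟨z, by simp⟩
      · intro j; exact ⟨z, by simp⟩
  · intro h K hKe hKf
    have hT : LinearMap.toContinuousLinearMap (projL K) ∈
        {T : H →L[ℂ] H | ∃ z : ℂ, T = z • (1 : H →L[ℂ] H)} := by
      rw [← h]
      constructor
      · intro i
        rcases (copyable_iff e K).mp hKe i with h0 | h1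
        · exact ⟨0, by simpa using h0⟩
        · exact ⟨1, by simpa using h1⟩
      · intro j
        rcases (copyable_iff f K).mp hKf j with h0 | h1
        · exact ⟨0, by simpa using h0⟩
        · exact ⟨1, by simpa using h1⟩
    obtain ⟨z, hz⟩ := hT
    have hzx : ∀ x : H, projL K x = z • x := by
      intro x
      have := congrArg (fun g => g x) hz
      simpa using this
    by_cases hKbot : K = ⊥
    · exact Or.inl hKbot
    · right
      obtain ⟨x, hxK, hx0⟩ := Submodule.exists_mem_ne_zero_of_ne_bot hKbot
      have : x = z • x := by rw [← hzx x, projL_eq_self hxK]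
      have hz1 : z = 1 := by
        by_contra hz1
        have : (1 - z) • x = 0 := by rw [sub_smul, one_smul, ← this, sub_self]
        rcases smul_eq_zero.mp this with h' | h'
        · exact hz1 (by linear_combination -h')
        · exact hx0 h'
      rw [Submodule.eq_top_iff']
      intro y
      have : projL K y = y := by rw [hzx, hz1, one_smul]
      rw [← this]
      exact projL_mem K y
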